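/- arXiv:2301.06949 — 2 statements merged into one kernel-verified Lean document; each statement's English description precedes it below -/
import Mathlib

section
/- Let k be a field of characteristic zero and let k[ε] denote the ring of dual numbers over k. Regard k as a k[ε]-module via the augmentation ε ↦ 0. Then for every natural number n, the Ext group Ext^n_{k[ε]}(k, k), computed in the abelian category of k[ε]-modules, is a one-dimensional k-vector space. -/
/-!
STATEMENT 0: Let `k` be a field of characteristic zero and `k[ε]` the ring of dual
numbers.  Regard `k` as a `k[ε]`-module via the augmentation `ε ↦ 0`.  Then for every
natural number `n`, `Ext^n_{k[ε]}(k, k)`, computed in the abelian category of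
`k[ε]`-modules, is a one-dimensional `k`-vector space.
-/

open CategoryTheory

/-- `k` as a module over the dual numbers `k[ε]` via the augmentation `ε ↦ 0`. -/
noncomputable instance dualNumberAugModule (k : Type) [Field k] :
    Module (DualNumber k) k :=
  Module.compHom k (TrivSqZeroExt.fstHom k k k).toRingHom

noncomputable instance (priority := 1100) dualNumberSelfModule (k : Type) [Field k] :
    Module (DualNumber k) (DualNumber k) :=
  Semiring.toModule

noncomputable instance (priority := 1100) dualNumberSelfSMul (k : Type) [Field k] :
    SMul (DualNumber k) (DualNumber k) :=
  instSMulOfMul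

namespace DE
variable (k : Type) [Field k]

lemma smul_def (r : DualNumber k) (x : k) : r • x = r.fst * x := rfl

noncomputable def aug : DualNumber k →ₗ[DualNumber k] k where
  toFun := TrivSqZeroExt.fst
  map_add' x y := by simp
  map_smul' r x := by simp [smul_def, smul_eq_mul]

noncomputable def mulEps : DualNumber k →ₗ[DualNumber k] DualNumber k where
  toFun x := DualNumber.eps * x
  map_add' x y := by ring
  map_smul' r x := by simp only [RingHom.id_apply, smul_eq_mul]; ring

lemma mulEps_mulEps : (mulEps k).comp (mulEps k) = 0 :=
  LinearMap.ext fun x => by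
    show DualNumber.eps * (DualNumber.eps * x) = 0
    rw [← mul_assoc, DualNumber.eps_mul_eps, zero_mul]

lemma eps_smul (x : k) : (DualNumber.eps : DualNumber k) • x = 0 := by
  simp [smul_def]

instance : Projective (ModuleCat.of (DualNumber k) (DualNumber k)) :=
  (IsProjective.iff_projective (DualNumber k)).mp (Module.Projective.of_free (R := DualNumber k) (P := DualNumber k))

noncomputable def P : ChainComplex (ModuleCat (DualNumber k)) ℕ :=
  ChainComplex.of (fun _ => ModuleCat.of (DualNumber k) (DualNumber k))
    (fun _ => ModuleCat.ofHom (mulEps k))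
    (fun _ => ModuleCat.hom_ext <| LinearMap.ext fun x => congrFun (congrArg _ (mulEps_mulEps k)) x)

lemma P_d (n : ℕ) : (P k).d (n+1) n = ModuleCat.ofHom (mulEps k) :=
  ChainComplex.of_d (fun _ => ModuleCat.of (DualNumber k) (DualNumber k)) (fun _ => ModuleCat.ofHom (mulEps k)) n

lemma exists_eps_mul (x : DualNumber k) (h : TrivSqZeroExt.fst x = 0) :
    ∃ y, DualNumber.eps * y = x := by
  refine ⟨TrivSqZeroExt.inl (TrivSqZeroExt.snd x), ?_⟩
  ext <;> simp [h]

lemma exact₀ : (ShortComplex.mk (ModuleCat.ofHom (mulEps k)) (ModuleCat.ofHom (aug k))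
    (ModuleCat.hom_ext <| LinearMap.ext fun x => by
      show aug k (mulEps k x) = 0
      show TrivSqZeroExt.fst (DualNumber.eps * (x : DualNumber k)) = 0
      simp [aug, mulEps])).Exact := by
  rw [ShortComplex.moduleCat_exact_iff]
  intro x hx
  exact exists_eps_mul k x hx

lemma exactSucc : (ShortComplex.mk (ModuleCat.ofHom (mulEps k)) (ModuleCat.ofHom (mulEps k))
    (ModuleCat.hom_ext <| LinearMap.ext fun x => congrFun (congrArg _ (mulEps_mulEps k)) x)).Exact := by
  rw [ShortComplex.moduleCat_exact_iff]
  intro x hx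
  refine exists_eps_mul k x ?_
  have := congrArg TrivSqZeroExt.snd hx
  simpa [mulEps] using this

lemma epiAug : Epi (ModuleCat.ofHom (aug k)) := by
  rw [ModuleCat.epi_iff_surjective]
  exact fun c => ⟨TrivSqZeroExt.inl c, rfl⟩

lemma P_exactAt_succ (n : ℕ) : (P k).ExactAt (n + 1) := by
  rw [HomologicalComplex.exactAt_iff' _ (n + 1 + 1) (n + 1) n (by simp) (by simp)]
  dsimp [P, HomologicalComplex.sc', HomologicalComplex.shortComplexFunctor']
  simp only [ChainComplex.of_d]
  exact exactSucc k

noncomputable def res : ProjectiveResolution (ModuleCat.of (DualNumber k) k) where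
  complex := P k
  projective n := by dsimp [P]; infer_instance
  π := (ChainComplex.toSingle₀Equiv _ _).symm ⟨ModuleCat.ofHom (aug k), by
        rw [P_d]
        exact ModuleCat.hom_ext <| LinearMap.ext fun x => by
          show aug k (mulEps k x) = 0
          show TrivSqZeroExt.fst ((DualNumber.eps : DualNumber k) * (show DualNumber k from x)) = 0
          exact zero_mul _⟩
  quasiIso := ⟨fun n => by
    cases n with
    | zero =>
      rw [ChainComplex.quasiIsoAt₀_iff, ShortComplex.quasiIso_iff_of_zeros']
      · refine (ShortComplex.exact_and_epi_g_iff_of_iso ?_).2 ⟨exact₀ k, epiAug k⟩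
        refine ShortComplex.isoMk (Iso.refl _) (Iso.refl _) (Iso.refl _) ?_ ?_
        · exact ((P_d k 0).trans (Category.comp_id _).symm).symm.trans (Category.id_comp _).symm |>.symm
        · simp [ChainComplex.toSingle₀Equiv]
          rfl
      all_goals rfl
    | succ n =>
      rw [quasiIsoAt_iff_exactAt']
      · exact P_exactAt_succ k n
      · apply ChainComplex.exactAt_succ_single_obj⟩


section Homology

lemma comp_mulEps (f : DualNumber k →ₗ[DualNumber k] k) : f ∘ₗ (mulEps k) = 0 :=
  LinearMap.ext fun (x : DualNumber k) => by
    show f (DualNumber.eps * x) = 0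
    rw [← smul_eq_mul, map_smul, eps_smul]

lemma mulEps_comp_eq_zero (f : ModuleCat.of (DualNumber k) (DualNumber k) ⟶
    ModuleCat.of (DualNumber k) k) : ModuleCat.ofHom (mulEps k) ≫ f = 0 :=
  ModuleCat.hom_ext (comp_mulEps k f.hom)

noncomputable abbrev K : CochainComplex (ModuleCat (DualNumber k)) ℕ :=
  (P k).linearYonedaObj (DualNumber k) (ModuleCat.of (DualNumber k) k)

lemma K_d_zero (i j : ℕ) : (K k).d i j = 0 := by
  rw [ChainComplex.linearYonedaObj_d]
  by_cases h : j = i + 1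
  · subst h
    exact ModuleCat.hom_ext <| LinearMap.ext fun f => by
      show (P k).d (i+1) i ≫ f = 0
      rw [P_d]
      exact mulEps_comp_eq_zero k f
  · have : (P k).d j i = 0 := by
      apply HomologicalComplex.shape
      exact fun hh => h hh.symm
    exact ModuleCat.hom_ext <| LinearMap.ext fun f => by
      show (P k).d j i ≫ f = 0
      rw [this, Limits.zero_comp]

noncomputable def homologyIsoX {C : Type*} [CategoryTheory.Category C] [Abelian C] {ι : Type*}
    {c : ComplexShape ι} (L : HomologicalComplex C c) (n : ι) [L.HasHomology n]
    (hf : (L.sc n).f = 0) (hg : (L.sc n).g = 0) :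
    L.homology n ≅ L.X n :=
  (ShortComplex.HomologyData.ofZeros (L.sc n) hf hg).left.homologyIso

noncomputable def ev1 : (ModuleCat.of (DualNumber k) (DualNumber k) ⟶
    ModuleCat.of (DualNumber k) k) ≃ₗ[DualNumber k] k where
  toFun f := f (1 : DualNumber k)
  map_add' f g := rfl
  map_smul' r f := rfl
  invFun c := ModuleCat.ofHom (LinearMap.toSpanSingleton (DualNumber k) k c)
  left_inv f := ModuleCat.hom_ext <| LinearMap.ext fun (x : DualNumber k) => by
    show x • f.hom (1 : DualNumber k) = f.hom x
    rw [← map_smul, smul_eq_mul, mul_one]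
  right_inv c := by
    show (1 : DualNumber k) • c = c
    rw [one_smul]

noncomputable def extIso (n : ℕ) : ((Ext (DualNumber k) (ModuleCat (DualNumber k)) n).obj
      (Opposite.op (ModuleCat.of (DualNumber k) k))).obj (ModuleCat.of (DualNumber k) k)
    ≅ ModuleCat.of (DualNumber k) k :=
  (res k).isoExt n (ModuleCat.of (DualNumber k) k) ≪≫
    homologyIsoX (K k) n (K_d_zero k _ _) (K_d_zero k _ _) ≪≫
    (ev1 k).toModuleIso

end Homology

end DE

noncomputable def restrictScalarsEquiv (k : Type) [Field k] {M N : Type} [AddCommGroup M]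
    [AddCommGroup N] [Module (DualNumber k) M] [Module (DualNumber k) N]
    (e : M ≃ₗ[DualNumber k] N) :
    RestrictScalars k (DualNumber k) M ≃ₗ[k] RestrictScalars k (DualNumber k) N where
  toFun := e
  invFun := e.symm
  map_add' := e.map_add
  map_smul' c x := e.map_smul (algebraMap k (DualNumber k) c) x
  left_inv := e.left_inv
  right_inv := e.right_inv

noncomputable def restrictAugEquiv (k : Type) [Field k] :
    RestrictScalars k (DualNumber k) k ≃ₗ[k] k where
  toFun x := x
  invFun x := x
  map_add' _ _ := rfl
  map_smul' c x := by
    have hy : ∀ (y : k), TrivSqZeroExt.fst ((algebraMap k (DualNumber k)) c) * y = c * y := by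
      intro y
      rw [TrivSqZeroExt.algebraMap_eq_inl, TrivSqZeroExt.fst_inl]
    exact hy x
  left_inv _ := rfl
  right_inv _ := rfl

theorem ext_dualNumber_aug_one_dimensional (k : Type) [Field k] [CharZero k] (n : ℕ) :
    Module.finrank k (RestrictScalars k (DualNumber k)
      (((Ext (DualNumber k) (ModuleCat (DualNumber k)) n).obj
          (Opposite.op (ModuleCat.of (DualNumber k) k))).obj
        (ModuleCat.of (DualNumber k) k))) = 1 := by
  have e := (DE.extIso k n).toLinearEquiv
  rw [LinearEquiv.finrank_eq (restrictScalarsEquiv k e ≪≫ₗ restrictAugEquiv k)]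
  exact Module.finrank_self k
end

section
/- Let k be a field of characteristic zero, d a natural number, and R = k[x₁, …, x_d] the polynomial ring in d variables. Define the algebraic de Rham complex of R over k with terms Ω^j = ⨁_{1 ≤ i₁ < ⋯ < i_j ≤ d} R·dx_{i₁}∧⋯∧dx_{i_j} (the j-th exterior power of the free R-module on symbols dx₁, …, dx_d) and differential determined by d(f · ω) = Σ_{i=1}^d (∂f/∂x_i) dx_i ∧ ω for f ∈ R and basis forms ω, where ∂/∂x_i denotes the formal partial derivative. Then this complex is exact in every positive degree, and the kernel of d: Ω⁰ → Ω¹ is exactly the constants k ⊆ R (the algebraic Poincaré lemma). -/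
/-!
STATEMENT 12: Let `k` be a field of characteristic zero, `d : ℕ`, and
`R = k[x₁, …, x_d]`.  The algebraic de Rham complex of `R` over `k` has `j`-th term
`Ω^j = ⨁_{S ⊆ {1,…,d}, |S| = j} R·dx_S` (here realized in coordinates: a `j`-form is
a function assigning to each subset `S` of cardinality `j` its coefficient in `R`)
and differential `d(f·dx_S) = Σ_i (∂f/∂x_i) dx_i ∧ dx_S`, which in coordinates reads
`(dω)_T = Σ_{i ∈ T} (−1)^{#{s ∈ T : s < i}} ∂(ω_{T∖{i}})/∂x_i`.  This complex is
exact in every positive degree, and the kernel of `d : Ω⁰ → Ω¹` is exactly the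
constants `k ⊆ R` (the algebraic Poincaré lemma).
-/

open MvPolynomial

/-- The coordinates of a `j`-form on affine `d`-space: each subset `S ⊆ {1,…,d}` of
cardinality `j` (indexing the basis form `dx_S = dx_{i₁} ∧ ⋯ ∧ dx_{i_j}`,
`i₁ < ⋯ < i_j ∈ S`) is assigned its coefficient, a polynomial. -/
abbrev OmegaForm (k : Type) [Field k] (d j : ℕ) : Type :=
  {S : Finset (Fin d) // S.card = j} → MvPolynomial (Fin d) k

/-- The de Rham differential in coordinates: for a `j`-form `ω`,
`(dω)_T = Σ_{i ∈ T} (−1)^{#{s ∈ T : s < i}} ∂(ω_{T∖{i}})/∂x_i`, which is the unique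
`k`-linear map satisfying `d(f·dx_S) = Σ_i (∂f/∂x_i) dx_i ∧ dx_S`. -/
noncomputable def deRhamD (k : Type) [Field k] (d j : ℕ) (ω : OmegaForm k d j) :
    OmegaForm k d (j + 1) :=
  fun T => ∑ i ∈ T.1.attach,
    (-1 : MvPolynomial (Fin d) k) ^ (T.1.filter (fun s => s < i.1)).card *
      MvPolynomial.pderiv i.1
        (ω ⟨T.1.erase i.1, by simp [Finset.card_erase_of_mem i.2, T.2]⟩)


section Aux
open Finsupp

variable {k : Type} [Field k] {d : ℕ}

lemma coeff_pderiv (i : Fin d) (u : Fin d →₀ ℕ) (f : MvPolynomial (Fin d) k) :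
    coeff u (pderiv i f) = ((u i + 1 : ℕ) : k) * coeff (u + Finsupp.single i 1) f := by
  induction f using MvPolynomial.induction_on' with
  | monomial s a =>
    rw [pderiv_monomial, coeff_monomial, coeff_monomial]
    by_cases h : s = u + Finsupp.single i 1
    · subst h
      have h1 : u + Finsupp.single i 1 - Finsupp.single i 1 = u := by
        ext j; simp [Finsupp.single_apply]
      have h2 : ((u + Finsupp.single i 1) : Fin d →₀ ℕ) i = u i + 1 := by
        simp [Finsupp.add_apply, Finsupp.single_apply]
      rw [if_pos h1, h2]
      simp only [if_pos rfl]
      push_cast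
      ring
    · rw [if_neg h]
      by_cases hs : s i = 0
      · simp [hs]
      · have : ¬ (s - Finsupp.single i 1 = u) := by
          intro he
          apply h
          ext j
          by_cases hj : j = i
          · subst hj
            have h3 := DFunLike.congr_fun he j
            simp [Finsupp.add_apply, Finsupp.single_apply] at h3 ⊢
            omega
          · have := DFunLike.congr_fun he j
            simp [Finsupp.single_apply, Ne.symm hj] at this ⊢
            omega
        rw [if_neg this, mul_zero]
  | add p q hp hq =>
    simp [map_add, coeff_add, hp, hq, mul_add]

noncomputable def Phi (p : ℕ) (f : MvPolynomial (Fin d) k) : MvPolynomial (Fin d) k :=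
  ∑ m ∈ f.support, ((((∑ i, m i) + p : ℕ) : k)⁻¹) • monomial m (coeff m f)

lemma coeff_Phi (p : ℕ) (u : Fin d →₀ ℕ) (f : MvPolynomial (Fin d) k) :
    coeff u (Phi p f) = (((∑ i, u i) + p : ℕ) : k)⁻¹ * coeff u f := by
  rw [Phi, MvPolynomial.coeff_sum]
  rw [Finset.sum_eq_single u]
  · simp [coeff_smul, coeff_monomial]
  · intro m _ hm
    simp [coeff_smul, coeff_monomial, hm]
  · intro hu
    rw [MvPolynomial.notMem_support_iff] at hu
    simp [hu]

lemma Phi_zero (p : ℕ) : Phi p (0 : MvPolynomial (Fin d) k) = 0 := by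
  ext u; simp [coeff_Phi]

lemma Phi_sum {α : Type} (p : ℕ) (s : Finset α) (f : α → MvPolynomial (Fin d) k) :
    Phi p (∑ a ∈ s, f a) = ∑ a ∈ s, Phi p (f a) := by
  ext u
  simp [coeff_Phi, MvPolynomial.coeff_sum, Finset.mul_sum]

lemma neg_one_pow_eq_C (n : ℕ) :
    ((-1 : MvPolynomial (Fin d) k) ^ n) = C ((-1 : k) ^ n) := by
  simp [map_pow]

lemma Phi_sign_mul (p n : ℕ) (f : MvPolynomial (Fin d) k) :
    Phi p ((-1 : MvPolynomial (Fin d) k) ^ n * f)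
      = (-1 : MvPolynomial (Fin d) k) ^ n * Phi p f := by
  ext u
  rw [neg_one_pow_eq_C]
  simp only [coeff_Phi, coeff_C_mul]
  ring

lemma pderiv_Phi (p : ℕ) (i : Fin d) (f : MvPolynomial (Fin d) k) :
    pderiv i (Phi p f) = Phi (p + 1) (pderiv i f) := by
  ext u
  rw [_root_.coeff_pderiv, coeff_Phi, coeff_Phi, _root_.coeff_pderiv]
  have hdeg : (∑ j, ((u + Finsupp.single i 1) : Fin d →₀ ℕ) j) = (∑ j, u j) + 1 := by
    simp only [Finsupp.add_apply, Finset.sum_add_distrib]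
    congr 1
    simp [Finsupp.single_apply]
  rw [hdeg]
  ring_nf

lemma euler_Phi [CharZero k] (p : ℕ) (hp : 0 < p) (f : MvPolynomial (Fin d) k) :
    ((p : ℕ) : MvPolynomial (Fin d) k) * Phi p f
      + ∑ i, X i * pderiv i (Phi p f) = f := by
  ext u
  have hXp : ∀ (i : Fin d) (g : MvPolynomial (Fin d) k),
      coeff u (X i * pderiv i g) = ((u i : ℕ) : k) * coeff u g := by
    intro i g
    rw [coeff_X_mul']
    by_cases h : i ∈ u.support
    · rw [if_pos h, _root_.coeff_pderiv]
      have h1 : ((u - Finsupp.single i 1) : Fin d →₀ ℕ) i + 1 = u i := by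
        have : u i ≠ 0 := Finsupp.mem_support_iff.mp h
        simp [Finsupp.single_apply]
        omega
      have h2 : u - Finsupp.single i 1 + Finsupp.single i 1 = u := by
        ext j
        have : u i ≠ 0 := Finsupp.mem_support_iff.mp h
        by_cases hj : j = i
        · subst hj; simp [Finsupp.single_apply]; omega
        · simp [Finsupp.single_apply, Ne.symm hj]
      rw [h1, h2]
    · rw [if_neg h]
      rw [Finsupp.notMem_support_iff] at h
      simp [h]
  rw [coeff_add, MvPolynomial.coeff_sum]
  simp only [hXp, coeff_Phi]
  rw [← Finset.sum_mul, ← Nat.cast_sum]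
  have hC : coeff u (((p : ℕ) : MvPolynomial (Fin d) k) * Phi p f)
      = ((p : ℕ) : k) * coeff u (Phi p f) := by
    rw [show ((p : ℕ) : MvPolynomial (Fin d) k) = C ((p : ℕ) : k) by simp, coeff_C_mul]
  rw [hC, coeff_Phi]
  have hne : ((((∑ i, u i) + p : ℕ)) : k) ≠ 0 := by
    have h0 : (∑ i, u i) + p ≠ 0 := by omega
    exact_mod_cast Nat.cast_ne_zero.mpr h0
  push_cast at hne ⊢
  field_simp
  ring

variable (k) in
noncomputable def sg [Field k] (S : Finset (Fin d)) (i : Fin d) : MvPolynomial (Fin d) k :=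
  (-1) ^ ((S.filter (fun s => s < i)).card)

variable (k) in
noncomputable def dE [Field k] (g : Finset (Fin d) → MvPolynomial (Fin d) k)
    (T : Finset (Fin d)) : MvPolynomial (Fin d) k :=
  ∑ i ∈ T, sg k T i * pderiv i (g (T.erase i))

variable (k) in
noncomputable def iotaE [Field k] (g : Finset (Fin d) → MvPolynomial (Fin d) k)
    (S : Finset (Fin d)) : MvPolynomial (Fin d) k :=
  ∑ i ∈ Sᶜ, sg k S i * (X i * g (insert i S))

lemma pderiv_sg_mul (S : Finset (Fin d)) (j i : Fin d) (f : MvPolynomial (Fin d) k) :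
    pderiv i (sg k S j * f) = sg k S j * pderiv i f := by
  rw [sg, neg_one_pow_eq_C, pderiv_C_mul]

lemma sg_mul_self (S : Finset (Fin d)) (i : Fin d) :
    sg k S i * sg k S i = 1 := by
  rw [sg, ← pow_add, ← two_mul, pow_mul]
  norm_num

lemma sg_erase (T : Finset (Fin d)) (i : Fin d) :
    sg k (T.erase i) i = sg k T i := by
  rw [sg, sg, Finset.filter_erase, Finset.erase_eq_of_notMem (by simp)]

lemma sg_insert (T : Finset (Fin d)) (l : Fin d) :
    sg k (insert l T) l = sg k T l := by
  rw [sg, sg, Finset.filter_insert, if_neg (lt_irrefl l)]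

lemma sign_key (T : Finset (Fin d)) (i l : Fin d) (hi : i ∈ T) (hl : l ∉ T) :
    (T.filter (fun s => s < l)).card + ((insert l T).filter (fun s => s < i)).card
      = ((T.filter (fun s => s < i)).card
        + ((T.erase i).filter (fun s => s < l)).card) + 1 := by
  have hne : i ≠ l := fun h => hl (h ▸ hi)
  have e1 : ((insert l T).filter (fun s => s < i)).card
      = (T.filter (fun s => s < i)).card + (if l < i then 1 else 0) := by
    rw [Finset.filter_insert]
    split
    · rw [Finset.card_insert_of_notMem (by simp [hl])]
    · rw [add_zero]
  have e2 : (T.filter (fun s => s < l)).card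
      = ((T.erase i).filter (fun s => s < l)).card + (if i < l then 1 else 0) := by
    rw [Finset.filter_erase]
    by_cases h : i < l
    · have hmem : i ∈ T.filter (fun s => s < l) := Finset.mem_filter.mpr ⟨hi, h⟩
      rw [if_pos h, Finset.card_erase_of_mem hmem]
      have : 0 < (T.filter (fun s => s < l)).card := Finset.card_pos.mpr ⟨i, hmem⟩
      omega
    · rw [if_neg h, Finset.erase_eq_of_notMem (by simp [h]), add_zero]
  rcases lt_or_gt_of_ne hne with h | h
  · simp [e1, e2, h, not_lt_of_gt h]
    omega
  · simp [e1, e2, h, not_lt_of_gt h]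
    omega

lemma sg_swap (T : Finset (Fin d)) (i l : Fin d) (hi : i ∈ T) (hl : l ∉ T) :
    sg k T l * sg k (insert l T) i = -(sg k T i * sg k (T.erase i) l) := by
  simp only [sg, ← pow_add]
  rw [sign_key T i l hi hl, pow_succ]
  ring

lemma cartan (g : Finset (Fin d) → MvPolynomial (Fin d) k) (T : Finset (Fin d)) :
    dE k (iotaE k g) T + iotaE k (dE k g) T
      = (T.card : MvPolynomial (Fin d) k) * g T + ∑ i, X i * pderiv i (g T) := by
  have step1 : dE k (iotaE k g) T
      = ((T.card : MvPolynomial (Fin d) k) * g T + ∑ i ∈ T, X i * pderiv i (g T))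
        + ∑ i ∈ T, ∑ l ∈ Tᶜ, sg k T i * sg k (T.erase i) l
            * (X l * pderiv i (g (insert l (T.erase i)))) := by
    rw [show (T.card : MvPolynomial (Fin d) k) * g T = ∑ _i ∈ T, g T by
      rw [Finset.sum_const, nsmul_eq_mul], ← Finset.sum_add_distrib,
      ← Finset.sum_add_distrib]
    unfold dE iotaE
    refine Finset.sum_congr rfl fun i hi => ?_
    rw [Finset.compl_erase, Finset.sum_insert (by simp [hi]), Finset.insert_erase hi]
    rw [map_add, mul_add, map_sum, Finset.mul_sum]
    congr 1
    · rw [pderiv_sg_mul, sg_erase, ← mul_assoc, sg_mul_self, one_mul, pderiv_mul,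
        pderiv_X_self, one_mul]
    · refine Finset.sum_congr rfl fun l hl => ?_
      have hli : l ≠ i := by
        intro h; subst h; exact (Finset.mem_compl.mp hl) hi
      rw [pderiv_sg_mul, pderiv_mul, pderiv_X_of_ne hli, zero_mul, zero_add]
      ring
  have step2 : iotaE k (dE k g) T
      = (∑ l ∈ Tᶜ, X l * pderiv l (g T))
        + ∑ l ∈ Tᶜ, ∑ i ∈ T, sg k T l * sg k (insert l T) i
            * (X l * pderiv i (g (insert l (T.erase i)))) := by
    rw [← Finset.sum_add_distrib]
    unfold iotaE dE
    refine Finset.sum_congr rfl fun l hl => ?_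
    have hlT : l ∉ T := Finset.mem_compl.mp hl
    rw [Finset.sum_insert hlT, Finset.erase_insert hlT, sg_insert]
    rw [mul_add, Finset.mul_sum, mul_add, Finset.mul_sum]
    congr 1
    · rw [show sg k T l * (X l * (sg k T l * pderiv l (g T)))
          = (sg k T l * sg k T l) * (X l * pderiv l (g T)) by ring,
        sg_mul_self, one_mul]
    · refine Finset.sum_congr rfl fun i hi => ?_
      have hil : i ≠ l := fun h => hlT (h ▸ hi)
      rw [Finset.erase_insert_of_ne (Ne.symm hil)]
      ring
  have hcancel : (∑ i ∈ T, ∑ l ∈ Tᶜ, sg k T i * sg k (T.erase i) l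
        * (X l * pderiv i (g (insert l (T.erase i)))))
      + ∑ l ∈ Tᶜ, ∑ i ∈ T, sg k T l * sg k (insert l T) i
        * (X l * pderiv i (g (insert l (T.erase i)))) = 0 := by
    rw [Finset.sum_comm, ← Finset.sum_add_distrib]
    refine Finset.sum_eq_zero fun l hl => ?_
    rw [← Finset.sum_add_distrib]
    refine Finset.sum_eq_zero fun i hi => ?_
    rw [sg_swap T i l hi (Finset.mem_compl.mp hl)]
    ring
  have hEuler : (∑ i ∈ T, X i * pderiv i (g T)) + ∑ i ∈ Tᶜ, X i * pderiv i (g T)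
      = ∑ i, X i * pderiv i (g T) := Finset.sum_add_sum_compl T _
  rw [step1, step2]
  linear_combination hcancel + hEuler


variable (k) in
noncomputable def extendForm [Field k] (j : ℕ) (ω : OmegaForm k d j) :
    Finset (Fin d) → MvPolynomial (Fin d) k :=
  fun S => if h : S.card = j then ω ⟨S, h⟩ else 0

lemma deRhamD_eq_dE (j : ℕ) (ω : OmegaForm k d j) (T : {S : Finset (Fin d) // S.card = j + 1}) :
    deRhamD k d j ω T = dE k (extendForm k j ω) T.1 := by
  simp only [deRhamD, dE]
  rw [← Finset.sum_attach T.1 (fun i => sg k T.1 i * pderiv i (extendForm k j ω (T.1.erase i)))]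
  refine Finset.sum_congr rfl fun i _ => ?_
  have hc : (T.1.erase i.1).card = j := by
    simp [Finset.card_erase_of_mem i.2, T.2]
  rw [sg, extendForm, dif_pos hc]

lemma eq_C_of_pderiv_zero [CharZero k] (f : MvPolynomial (Fin d) k)
    (h : ∀ i, pderiv i f = 0) : f = C (coeff 0 f) := by
  ext u
  rw [coeff_C]
  by_cases hu : (0 : Fin d →₀ ℕ) = u
  · subst hu; simp
  · rw [if_neg hu]
    have : u ≠ 0 := fun he => hu he.symm
    obtain ⟨i, hi⟩ := Finsupp.ne_iff.mp this
    simp only [Finsupp.coe_zero, Pi.zero_apply] at hi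
    have hui : u i ≠ 0 := fun he => hi he
    have hc := coeff_pderiv i (u - Finsupp.single i 1) f
    rw [h i] at hc
    have h1 : ((u - Finsupp.single i 1) : Fin d →₀ ℕ) i + 1 = u i := by
      simp [Finsupp.single_apply]; omega
    have h2 : u - Finsupp.single i 1 + Finsupp.single i 1 = u := by
      ext j
      by_cases hj : j = i
      · subst hj; simp [Finsupp.single_apply]; omega
      · simp [Finsupp.single_apply, Ne.symm hj]
    rw [h1, h2] at hc
    have : ((u i : ℕ) : k) ≠ 0 := Nat.cast_ne_zero.mpr hui
    have := hc.symm
    rcases mul_eq_zero.mp this with h' | h'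
    · exact absurd h' ‹((u i : ℕ) : k) ≠ 0›
    · exact h'

end Aux

/-- Algebraic Poincaré lemma: the polynomial de Rham complex is exact in positive
degrees, and the kernel of `d : Ω⁰ → Ω¹` consists exactly of the constants. -/
theorem mvPolynomial_deRham_exact (k : Type) [Field k] [CharZero k] (d : ℕ) :
    (∀ (j : ℕ) (ω : OmegaForm k d (j + 1)), deRhamD k d (j + 1) ω = 0 →
      ∃ η : OmegaForm k d j, deRhamD k d j η = ω) ∧
    (∀ f : OmegaForm k d 0, deRhamD k d 0 f = 0 ↔
      ∃ c : k, f = fun _ => MvPolynomial.C c) := by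
  constructor
  · intro j ω hω
    classical
    set Φω : OmegaForm k d (j + 1) := fun S => Phi (j + 1) (ω S) with hΦω
    set G : Finset (Fin d) → MvPolynomial (Fin d) k := extendForm k (j + 1) Φω with hGdef
    refine ⟨fun S => iotaE k G S.1, ?_⟩
    funext T
    have h1 : deRhamD k d j (fun S => iotaE k G S.1) T = dE k (iotaE k G) T.1 := by
      rw [deRhamD_eq_dE, dE, dE]
      refine Finset.sum_congr rfl fun i hi => ?_
      have hc : (T.1.erase i).card = j := by
        rw [Finset.card_erase_of_mem hi, T.2]
        omega
      rw [extendForm, dif_pos hc]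
    have hdG : ∀ U : Finset (Fin d), U.card = j + 1 + 1 → dE k G U = 0 := by
      intro U hU
      have e : dE k G U = Phi (j + 1 + 1) (dE k (extendForm k (j + 1) ω) U) := by
        rw [dE, dE, Phi_sum]
        refine Finset.sum_congr rfl fun i hi => ?_
        have hc : (U.erase i).card = j + 1 := by
          rw [Finset.card_erase_of_mem hi, hU]
          omega
        rw [hGdef]
        simp only [extendForm, dif_pos hc, hΦω, sg, pderiv_Phi, Phi_sign_mul]
      rw [e, ← deRhamD_eq_dE (j + 1) ω ⟨U, hU⟩, hω]
      simp [Phi_zero]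
    have h2 : iotaE k (dE k G) T.1 = 0 := by
      rw [iotaE]
      refine Finset.sum_eq_zero fun l hl => ?_
      have hcard : (insert l T.1).card = j + 1 + 1 := by
        rw [Finset.card_insert_of_notMem (Finset.mem_compl.mp hl), T.2]
      rw [hdG _ hcard, mul_zero, mul_zero]
    have hcart := cartan (k := k) G T.1
    rw [h2, add_zero] at hcart
    have hGT : G T.1 = Phi (j + 1) (ω T) := by
      rw [hGdef, extendForm, dif_pos T.2]
    rw [h1, hcart, hGT, T.2]
    exact euler_Phi (j + 1) (Nat.succ_pos j) (ω T)
  · intro f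
    constructor
    · intro hdf
      have hall : ∀ x : {S : Finset (Fin d) // S.card = 0},
          x = ⟨∅, Finset.card_empty⟩ :=
        fun x => Subtype.ext (Finset.card_eq_zero.mp x.2)
      have hp : ∀ i : Fin d, pderiv i (f ⟨∅, Finset.card_empty⟩) = 0 := by
        intro i
        have h1 := congrFun hdf ⟨{i}, by simp⟩
        rw [deRhamD_eq_dE] at h1
        rw [Pi.zero_apply, dE, Finset.sum_singleton, sg, Finset.filter_singleton,
          if_neg (lt_irrefl i), Finset.erase_singleton] at h1
        simp only [Finset.card_empty, pow_zero, one_mul, extendForm, dif_pos] at h1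
        exact h1
      refine ⟨coeff 0 (f ⟨∅, Finset.card_empty⟩), ?_⟩
      funext x
      rw [hall x]
      exact eq_C_of_pderiv_zero _ hp
    · rintro ⟨c, rfl⟩
      funext T
      simp [deRhamD]
end
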